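/- Let 3 ≤ r ≤ n−3 and fix an r-subset I of [n]. Let K = {a < b < c} be the three smallest elements of I and suppose there exist d, e, f ∈ [n] \ I with d < e < f and a < d, b < e, c < f. Then the eight sets {a,b,c}, {a,b,f}, {a,e,c}, {a,e,f}, {b,d,c}, {b,d,f}, {c,d,e}, {d,e,f} form a cube subgraph of the graph on 3-subsets of {a,b,c,d,e,f} (adjacency = intersection of size 2), and {a,b,c} is the lexicographically smallest of the eight vertices. -/

import Mathlib

/-- Let `3 ≤ r ≤ n−3`, let `I` be an `r`-subset of `[n]` with three smallest elements
`a < b < c`, and suppose `d < e < f` lie in `[n] \ I` with `a < d`, `b < e`, `c < f`.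
Then the eight sets `{a,b,c},{a,b,f},{a,e,c},{a,e,f},{b,d,c},{b,d,f},{c,d,e},{d,e,f}`
form a cube subgraph of the graph on 3-subsets of `{a,b,c,d,e,f}` (adjacency =
intersection of size 2), and `{a,b,c}` is the lexicographically smallest vertex. -/
theorem stmt_12 (n r : ℕ) (hr : 3 ≤ r) (hrn : r ≤ n - 3)
    (I : Finset ℕ) (hIn : I ⊆ Finset.Icc 1 n) (hIcard : I.card = r)
    (a b c d e f : ℕ)
    (hab : a < b) (hbc : b < c) (hde : d < e) (hef : e < f)
    (had : a < d) (hbe : b < e) (hcf : c < f)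
    (habcI : ({a, b, c} : Finset ℕ) ⊆ I)
    (hmin : ∀ t ∈ I, t ∉ ({a, b, c} : Finset ℕ) → c < t)
    (hdn : d ∈ Finset.Icc 1 n) (hen : e ∈ Finset.Icc 1 n) (hfn : f ∈ Finset.Icc 1 n)
    (hdI : d ∉ I) (heI : e ∉ I) (hfI : f ∉ I)
    (g : (Fin 3 → Bool) → Finset ℕ)
    (hg : ∀ x, g x = {if x 0 then d else a, if x 1 then e else b, if x 2 then f else c}) :
    Function.Injective g ∧
    Set.range g = ({{a, b, c}, {a, b, f}, {a, e, c}, {a, e, f},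
                    {b, d, c}, {b, d, f}, {c, d, e}, {d, e, f}} : Set (Finset ℕ)) ∧
    (∀ x y : Fin 3 → Bool, (∃! i, x i ≠ y i) ↔ (g x ∩ g y).card = 2) ∧
    (∀ x : Fin 3 → Bool, x ≠ (fun _ => false) →
      List.Lex (· < ·) (Finset.sort ({a, b, c} : Finset ℕ) (· ≤ ·))
        (Finset.sort (g x) (· ≤ ·))) := by
  -- memberships and distinctness
  have haI : a ∈ I := habcI (by simp)
  have hbI : b ∈ I := habcI (by simp)
  have hcI : c ∈ I := habcI (by simp)
  have hbd : b ≠ d := fun h => hdI (h ▸ hbI)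
  have hcd : c ≠ d := fun h => hdI (h ▸ hcI)
  have hce : c ≠ e := fun h => heI (h ▸ hcI)
  -- encoding
  set H : Fin 3 × Bool → ℕ := fun p => if p.2 then ![d,e,f] p.1 else ![a,b,c] p.1 with hH
  have Hinj : Function.Injective H := by
    rintro ⟨i, u⟩ ⟨j, v⟩ h
    simp only [hH] at h
    fin_cases i <;> fin_cases j <;> cases u <;> cases v <;>
      first
        | rfl
        | (exfalso; simp at h <;> omega)
  set S : (Fin 3 → Bool) → Finset (Fin 3 × Bool) :=
    fun x => {(0, x 0), (1, x 1), (2, x 2)} with hS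
  have himg : ∀ x, g x = Finset.image H (S x) := by
    intro x
    rw [hg, hS]
    simp only [Finset.image_insert, Finset.image_singleton]
    cases hx0 : x 0 <;> cases hx1 : x 1 <;> cases hx2 : x 2 <;>
      simp [hH, hx0, hx1, hx2]
  refine ⟨?_, ?_, ?_, ?_⟩
  · intro x y hxy
    rw [himg, himg] at hxy
    have hSxy : S x = S y := Finset.image_injective Hinj hxy
    have key : ∀ x y : Fin 3 → Bool,
        ({(0, x 0), (1, x 1), (2, x 2)} : Finset (Fin 3 × Bool)) =
        {(0, y 0), (1, y 1), (2, y 2)} → x = y := by decide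
    exact key x y hSxy
  · ext s
    simp only [Set.mem_range, Set.mem_insert_iff, Set.mem_singleton_iff]
    have eq1 : ({d,b,c} : Finset ℕ) = {b,d,c} := by ext t; simp; tauto
    have eq2 : ({d,b,f} : Finset ℕ) = {b,d,f} := by ext t; simp; tauto
    have eq3 : ({d,e,c} : Finset ℕ) = {c,d,e} := by ext t; simp; tauto
    constructor
    · rintro ⟨x, rfl⟩
      rw [hg]
      cases hx0 : x 0 <;> cases hx1 : x 1 <;> cases hx2 : x 2 <;>
        simp [hx0, hx1, hx2, eq1, eq2, eq3]
    · rintro (rfl | rfl | rfl | rfl | rfl | rfl | rfl | rfl)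
      · exact ⟨![false,false,false], by rw [hg]; simp⟩
      · exact ⟨![false,false,true], by rw [hg]; simp⟩
      · exact ⟨![false,true,false], by rw [hg]; simp⟩
      · exact ⟨![false,true,true], by rw [hg]; simp⟩
      · exact ⟨![true,false,false], by rw [hg]; simp [← eq1]⟩
      · exact ⟨![true,false,true], by rw [hg]; simp [← eq2]⟩
      · exact ⟨![true,true,false], by rw [hg]; simp [← eq3]⟩
      · exact ⟨![true,true,true], by rw [hg]; simp⟩
  · intro x y
    rw [himg, himg, ← Finset.image_inter _ _ Hinj,
        Finset.card_image_of_injective _ Hinj]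
    have key : ∀ x y : Fin 3 → Bool,
        (∃ i, x i ≠ y i ∧ ∀ j, x j ≠ y j → j = i) ↔
        (({(0, x 0), (1, x 1), (2, x 2)} : Finset (Fin 3 × Bool)) ∩
         {(0, y 0), (1, y 1), (2, y 2)}).card = 2 := by decide
    exact key x y
  · -- lex part
    have lexHead : ∀ (u : ℕ) (l : List ℕ) (s : Finset ℕ),
        (∀ y ∈ s, u < y) → s.Nonempty →
        List.Lex (· < ·) (u :: l) (Finset.sort s (· ≤ ·)) := by
      intro u l s hlt hne
      rcases hw : Finset.sort s (· ≤ ·) with _ | ⟨w, t⟩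
      · exfalso
        have hlen := Finset.length_sort (α := ℕ) (· ≤ ·) (s := s)
        rw [hw] at hlen
        have : s.card = 0 := by simpa using hlen.symm
        rw [Finset.card_eq_zero] at this
        exact (by simp : ¬ (∅ : Finset ℕ).Nonempty) (this ▸ hne)
      · have : w ∈ s := (Finset.mem_sort (· ≤ ·)).mp (hw ▸ List.mem_cons_self)
        exact List.Lex.rel (hlt w this)
    have habc : Finset.sort ({a,b,c} : Finset ℕ) (· ≤ ·) = [a, b, c] := by
      rw [Finset.sort_insert (· ≤ ·) (by intro y hy; simp at hy; omega) (by simp; omega),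
          Finset.sort_insert (· ≤ ·) (by simp; omega) (by simp; omega),
          Finset.sort_singleton]
    intro x hx
    rw [habc, hg]
    cases hx0 : x 0
    · -- a ∈ g x
      rw [if_neg (by simp)]
      have hsub : Finset.sort
          ({a, if x 1 then e else b, if x 2 then f else c} : Finset ℕ) (· ≤ ·)
          = a :: Finset.sort ({if x 1 then e else b, if x 2 then f else c} : Finset ℕ) (· ≤ ·) := by
        apply Finset.sort_insert (· ≤ ·)
        · intro y hy; simp at hy
          rcases hy with rfl | rfl <;> split <;> omega
        · simp only [Finset.mem_insert, Finset.mem_singleton]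
          push_neg
          constructor <;> split <;> omega
      rw [hsub]
      apply List.Lex.cons
      cases hx1 : x 1
      · -- x 1 = false, so x 2 = true
        have hx2 : x 2 = true := by
          by_contra h
          apply hx
          funext i
          fin_cases i
          · exact hx0
          · exact hx1
          · exact Bool.eq_false_iff.mpr h
        rw [if_neg (by simp), hx2, if_pos rfl]
        have hbf : Finset.sort ({b, f} : Finset ℕ) (· ≤ ·) = [b, f] := by
          rw [Finset.sort_insert (· ≤ ·) (by simp; omega) (by simp; omega),
              Finset.sort_singleton]
        rw [hbf]
        exact List.Lex.cons (List.Lex.rel (by omega))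
      · apply lexHead
        · intro y hy
          rw [if_pos rfl] at hy
          simp at hy
          rcases hy with rfl | rfl
          · omega
          · split <;> omega
        · exact Finset.insert_nonempty _ _
    · -- every element of g x exceeds a
      rw [if_pos rfl]
      apply lexHead
      · intro y hy; simp at hy
        rcases hy with rfl | rfl | rfl
        · omega
        · split <;> omega
        · split <;> omega
      · exact Finset.insert_nonempty _ _
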